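/- Let G be a group. (i) For all g, x ∈ G and every integer m, the pairs (x^{−m}, (g^x)^m) and (x^{−m}, (g^m)^{x^m}) are simultaneously conjugate: there exists z ∈ G with z⁻¹·x^{−m}·z = x^{−m} and z⁻¹·(g^x)^m·z = (g^m)^{x^m}. (ii) If moreover G is finite, m is a natural number coprime to the exponent of G, and [x,g] commutes with both g and x, then the pairs (g^m, (g⁻¹x)^m) and (g^m, g^{−m}·x^m) are simultaneously conjugate. (This is the equivariance of the power map p_m with S and T on diconjugacy classes.) -/
import Mathlib

section aux

variable {G : Type*} [Group G]

/-- Conjugation of `x` by `g^k` when the commutator `c` is "central". -/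
lemma aux_conj_pow (g x c : G) (hc : g⁻¹ * x * g = x * c) (hcg : Commute c g) :
    ∀ k : ℕ, (g ^ k)⁻¹ * x * g ^ k = x * c ^ k := by
  intro k
  induction k with
  | zero => simp
  | succ k ih =>
    have h0 : (g ^ (k+1))⁻¹ * x * g ^ (k+1) = g⁻¹ * ((g ^ k)⁻¹ * x * g ^ k) * g := by
      rw [pow_succ]; group
    rw [h0, ih]
    calc g⁻¹ * (x * c ^ k) * g
        = (g⁻¹ * x) * (c ^ k * g) := by group
      _ = (g⁻¹ * x) * (g * c ^ k) := by rw [(hcg.pow_left k).eq]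
      _ = (g⁻¹ * x * g) * c ^ k := by group
      _ = x * c * c ^ k := by rw [hc]
      _ = x * c ^ (k+1) := by rw [mul_assoc, ← pow_succ']

/-- Class-2 power formula. -/
lemma aux_mul_pow (a b d : G) (hd : b * a = a * b * d)
    (hda : Commute d a) (hdb : Commute d b) :
    ∀ n : ℕ, (a * b) ^ n = a ^ n * b ^ n * d ^ n.choose 2 := by
  have hba : ∀ m : ℕ, b ^ m * a = a * b ^ m * d ^ m := by
    intro m
    induction m with
    | zero => simp
    | succ m ihm =>
      calc b ^ (m+1) * a = b ^ m * (b * a) := by rw [pow_succ]; group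
        _ = b ^ m * (a * b * d) := by rw [hd]
        _ = (b ^ m * a) * (b * d) := by group
        _ = (a * b ^ m * d ^ m) * (b * d) := by rw [ihm]
        _ = a * b ^ m * (d ^ m * b) * d := by group
        _ = a * b ^ m * (b * d ^ m) * d := by rw [(hdb.pow_left m).eq]
        _ = a * (b ^ m * b) * (d ^ m * d) := by group
        _ = a * b ^ (m+1) * d ^ (m+1) := by rw [pow_succ, pow_succ]
  intro n
  induction n with
  | zero => simp
  | succ n ih =>
    have hch : n + n.choose 2 = (n+1).choose 2 := by
      rw [Nat.choose_succ_succ, Nat.choose_one_right]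
    calc (a * b) ^ (n+1) = (a * b) ^ n * (a * b) := pow_succ _ _
      _ = a ^ n * b ^ n * d ^ n.choose 2 * (a * b) := by rw [ih]
      _ = a ^ n * b ^ n * (d ^ n.choose 2 * a) * b := by group
      _ = a ^ n * b ^ n * (a * d ^ n.choose 2) * b := by rw [(hda.pow_left _).eq]
      _ = a ^ n * (b ^ n * a) * (d ^ n.choose 2 * b) := by group
      _ = a ^ n * (b ^ n * a) * (b * d ^ n.choose 2) := by rw [(hdb.pow_left _).eq]
      _ = a ^ n * (a * b ^ n * d ^ n) * (b * d ^ n.choose 2) := by rw [hba n]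
      _ = (a ^ n * a) * b ^ n * (d ^ n * b) * d ^ n.choose 2 := by group
      _ = (a ^ n * a) * b ^ n * (b * d ^ n) * d ^ n.choose 2 := by rw [(hdb.pow_left n).eq]
      _ = (a ^ n * a) * (b ^ n * b) * (d ^ n * d ^ n.choose 2) := by group
      _ = a ^ (n+1) * b ^ (n+1) * d ^ ((n+1).choose 2) := by
          rw [pow_succ, pow_succ, ← pow_add, hch]

end aux

/-- Equivariance of the power map `p_m` with `S` and `T` on diconjugacy classes:
(i) for all `g, x` and every integer `m`, the pairs `(x^{−m}, (g^x)^m)` and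
`(x^{−m}, (g^m)^{x^m})` are simultaneously conjugate;
(ii) if `G` is finite, `m` is a natural number coprime to the exponent of `G`, and
`[x,g] = x⁻¹g⁻¹xg` commutes with both `g` and `x`, then the pairs
`(g^m, (g⁻¹x)^m)` and `(g^m, g^{−m}x^m)` are simultaneously conjugate. -/
theorem power_map_equivariance {G : Type*} [Group G] :
    (∀ (g x : G) (m : ℤ), ∃ z : G,
        z⁻¹ * x ^ (-m) * z = x ^ (-m) ∧
        z⁻¹ * (x⁻¹ * g * x) ^ m * z = (x ^ m)⁻¹ * g ^ m * x ^ m) ∧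
    (Finite G → ∀ (g x : G) (m : ℕ), Nat.Coprime m (Monoid.exponent G) →
        Commute (x⁻¹ * g⁻¹ * x * g) g → Commute (x⁻¹ * g⁻¹ * x * g) x →
        ∃ z : G,
          z⁻¹ * g ^ m * z = g ^ m ∧
          z⁻¹ * (g⁻¹ * x) ^ m * z = (g ^ m)⁻¹ * x ^ m) := by
  constructor
  · intro g x m
    refine ⟨x ^ (m - 1), by group, ?_⟩
    have h1 : (x⁻¹ * g * x) ^ m = x⁻¹ * g ^ m * x := by
      have := conj_zpow (i := m) (a := x⁻¹) (b := g)
      simpa using this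
    rw [h1]
    group
  · intro hfin g x m hcop hcg hcx
    set c := x⁻¹ * g⁻¹ * x * g with hc
    set E := Monoid.exponent G with hE
    have hEpos : 0 < E := Nat.pos_of_ne_zero Monoid.exponent_ne_zero_of_finite
    haveI : NeZero E := ⟨hEpos.ne'⟩
    have hgxg : g⁻¹ * x * g = x * c := by rw [hc]; group
    have hgc : g * c * g⁻¹ = c := by rw [← hcg.eq]; group
    have h3' : g * x * g⁻¹ = x * c⁻¹ := by
      have h2 : x = (g * x * g⁻¹) * c := by
        conv_lhs => rw [show x = g * (g⁻¹ * x * g) * g⁻¹ by group]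
        rw [hgxg, show g * (x * c) * g⁻¹ = (g * x * g⁻¹) * (g * c * g⁻¹) by group, hgc]
      exact eq_mul_inv_iff_mul_eq.mpr h2.symm
    have hd : x * g⁻¹ = g⁻¹ * x * c⁻¹ := by
      rw [show x * g⁻¹ = g⁻¹ * (g * x * g⁻¹) by group, h3']; group
    have hpow : ∀ n : ℕ, (g⁻¹ * x) ^ n = (g⁻¹) ^ n * x ^ n * (c⁻¹) ^ n.choose 2 :=
      aux_mul_pow g⁻¹ x c⁻¹ hd hcg.inv_left.inv_right hcx.inv_left
    obtain ⟨k, hk⟩ : ∃ k : ℕ, (k * m : ZMod E) = (m.choose 2 : ZMod E) := by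
      have hu : IsUnit (m : ZMod E) := (ZMod.isUnit_iff_coprime m E).mpr hcop
      obtain ⟨u, hu'⟩ := hu
      refine ⟨(((u⁻¹ : (ZMod E)ˣ) : ZMod E) * (m.choose 2 : ZMod E)).val, ?_⟩
      push_cast [ZMod.natCast_val, ZMod.cast_id]
      rw [mul_comm, ← mul_assoc, ← hu', ← Units.val_mul, mul_inv_cancel, Units.val_one, one_mul]
    have hordc : c ^ E = 1 := Monoid.pow_exponent_eq_one c
    have hmod : k * m ≡ m.choose 2 [MOD E] :=
      (ZMod.natCast_eq_natCast_iff _ _ _).mp (by exact_mod_cast hk)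
    have hpowc : c ^ (k * m) = c ^ m.choose 2 := by
      exact pow_eq_pow_iff_modEq.mpr (hmod.of_dvd (Monoid.order_dvd_exponent c))
    refine ⟨g ^ k, ?_, ?_⟩
    · have h : Commute (g ^ k) (g ^ m) := Commute.pow_pow_self g k m
      rw [mul_assoc, ← h.eq, ← mul_assoc]; group
    · have hconj : (g ^ k)⁻¹ * (g⁻¹ * x) * g ^ k = g⁻¹ * x * c ^ k := by
        have h1 : (g ^ k)⁻¹ * x * g ^ k = x * c ^ k := aux_conj_pow g x c hgxg hcg k
        have h2 : (g ^ k)⁻¹ * g⁻¹ = g⁻¹ * (g ^ k)⁻¹ := by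
          rw [← mul_inv_rev, ← mul_inv_rev, (Commute.self_pow g k).eq]
        calc (g ^ k)⁻¹ * (g⁻¹ * x) * g ^ k
            = ((g ^ k)⁻¹ * g⁻¹) * x * g ^ k := by group
          _ = g⁻¹ * ((g ^ k)⁻¹ * x * g ^ k) := by rw [h2]; group
          _ = g⁻¹ * (x * c ^ k) := by rw [h1]
          _ = g⁻¹ * x * c ^ k := by rw [mul_assoc]
      have hcomm : Commute (c ^ k) (g⁻¹ * x) :=
        ((hcg.inv_right.pow_left k).mul_right (hcx.pow_left k))
      have hmain : (g ^ k)⁻¹ * (g⁻¹ * x) ^ m * g ^ k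
          = (g⁻¹ * x) ^ m * c ^ (k * m) := by
        have h3 : ((g ^ k)⁻¹ * (g⁻¹ * x) * g ^ k) ^ m
            = (g ^ k)⁻¹ * (g⁻¹ * x) ^ m * g ^ k := by
          simpa using conj_pow (i := m) (a := (g ^ k)⁻¹) (b := g⁻¹ * x)
        rw [← h3, hconj, (hcomm.symm).mul_pow, ← pow_mul]
      rw [hmain, hpowc, hpow m, mul_assoc]; simp [inv_pow]
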